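/- Let F be a finite set of circles in the plane and let Lat(F) be the set of subsets Y of F closed under the restricted convex hull operation (i.e., whenever C ∈ F lies in the convex hull of the union of the members of Y, then C ∈ Y), ordered by inclusion. Then Lat(F) is a lattice and it is meet-distributive. -/

import Mathlib

open scoped Classical

/-- A subset `X` of a lattice with `⊥` is CD-independent if any two
incomparable members meet to `⊥`. -/
def CDIndep {L : Type*} [Lattice L] [OrderBot L] (X : Set L) : Prop :=
  ∀ x ∈ X, ∀ y ∈ X, ¬ x ≤ y → ¬ y ≤ x → x ⊓ y = ⊥

/-- `X` is a maximal CD-independent subset of `S` (within the ambient lattice). -/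
def MaxCDIndepIn {L : Type*} [Lattice L] [OrderBot L] (S X : Set L) : Prop :=
  X ⊆ S ∧ CDIndep X ∧ ∀ Y ⊆ S, CDIndep Y → X ⊆ Y → Y = X

/-- `X` is a maximal CD-independent subset of the whole lattice. -/
def MaxCDIndep {L : Type*} [Lattice L] [OrderBot L] (X : Set L) : Prop :=
  MaxCDIndepIn Set.univ X

/-- The length of the subposet `S`: the size of a longest chain contained in `S`, minus 1. -/
noncomputable def chainLen {L : Type*} [Lattice L] [Fintype L] (S : Set L) : ℕ :=
  ((Finset.univ.powerset.filter
      fun C : Finset L => ↑C ⊆ S ∧ IsChain (· ≤ ·) (C : Set L)).sup Finset.card) - 1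

/-- The length of the finite lattice `L`. -/
noncomputable def latLen (L : Type*) [Lattice L] [Fintype L] : ℕ :=
  chainLen (Set.univ : Set L)

/-- `u_*`: the meet of all lower covers of `u`. -/
noncomputable def lowstar {L : Type*} [Lattice L] [Fintype L] [BoundedOrder L] (u : L) : L :=
  (Finset.univ.filter fun v => v ⋖ u).inf id

/-- `L` is meet-distributive if every interval `[u_*, u]` (for `u ≠ ⊥`) is distributive. -/
def MeetDistrib (L : Type*) [Lattice L] [Fintype L] [BoundedOrder L] : Prop :=
  ∀ u : L, u ≠ ⊥ → ∀ x ∈ Set.Icc (lowstar u) u, ∀ y ∈ Set.Icc (lowstar u) u,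
    ∀ z ∈ Set.Icc (lowstar u) u, x ⊓ (y ⊔ z) = (x ⊓ y) ⊔ (x ⊓ z)

/-- Lower semimodularity: `a ⋖ a ⊔ b` implies `a ⊓ b ⋖ b`. -/
def LowerSemimodular (L : Type*) [Lattice L] : Prop :=
  ∀ a b : L, a ⋖ a ⊔ b → a ⊓ b ⋖ b

/-- The number of atoms of `L`. -/
noncomputable def atomsCard (L : Type*) [Lattice L] [OrderBot L] : ℕ :=
  {a : L | IsAtom a}.ncard

/-- `b` is the pseudocomplement of `a`: the largest element meeting `a` to `⊥`. -/
def PseudoCompl {L : Type*} [Lattice L] [OrderBot L] (a b : L) : Prop :=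
  a ⊓ b = ⊥ ∧ ∀ x, a ⊓ x = ⊥ → x ≤ b

/-- `(a, b)` is a pseudocomplemented pair: each is the pseudocomplement of the other. -/
def PseudoPair {L : Type*} [Lattice L] [OrderBot L] (a b : L) : Prop :=
  PseudoCompl a b ∧ PseudoCompl b a

/-- An element is meet-irreducible if it has exactly one cover. -/
def MeetIrred {L : Type*} [Lattice L] (a : L) : Prop :=
  ∃! b, a ⋖ b

/-- `L` is dually slim: no three-element antichain of meet-irreducible elements. -/
def DuallySlim (L : Type*) [Lattice L] : Prop :=
  ¬ ∃ x y z : L, MeetIrred x ∧ MeetIrred y ∧ MeetIrred z ∧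
    ¬ x ≤ y ∧ ¬ y ≤ x ∧ ¬ x ≤ z ∧ ¬ z ≤ x ∧ ¬ y ≤ z ∧ ¬ z ≤ y

/-- A bundled finite bounded lattice. -/
structure FinBddLattice where
  carrier : Type
  [lat : Lattice carrier]
  [fin : Fintype carrier]
  [bdd : BoundedOrder carrier]

attribute [instance] FinBddLattice.lat FinBddLattice.fin FinBddLattice.bdd

/-- `C` is a circle in the plane (possibly of radius `0`). -/
def IsCircle (C : Set (ℝ × ℝ)) : Prop :=
  ∃ u v r : ℝ, 0 ≤ r ∧ C = {p : ℝ × ℝ | (p.1 - u) ^ 2 + (p.2 - v) ^ 2 = r ^ 2}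

/-- `Y` is a closed subset of the finite set `F` of circles: every member of `F`
lying in the convex hull of the union of the members of `Y` belongs to `Y`. -/
def ClosedIn (F : Finset (Set (ℝ × ℝ))) (Y : Set (Set (ℝ × ℝ))) : Prop :=
  Y ⊆ ↑F ∧ ∀ C ∈ F, C ⊆ convexHull ℝ (⋃₀ Y) → C ∈ Y

noncomputable section CzedliAux


private lemma exists_three (t : Finset (ℝ × ℝ)) (h3 : t.card ≤ 3) (hne : t.Nonempty) :
    ∃ p q r, (↑t : Set (ℝ × ℝ)) ⊆ {p, q, r} ∧ p ∈ t ∧ q ∈ t ∧ r ∈ t := by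
  have h1 : 1 ≤ t.card := hne.card_pos
  have : t.card = 1 ∨ t.card = 2 ∨ t.card = 3 := by omega
  rcases this with h | h | h
  · obtain ⟨a, rfl⟩ := Finset.card_eq_one.mp h
    exact ⟨a, a, a, by simp, by simp, by simp, by simp⟩
  · obtain ⟨a, b, hab, rfl⟩ := Finset.card_eq_two.mp h
    exact ⟨a, b, b, by simp [Set.subset_def], by simp, by simp, by simp⟩
  · obtain ⟨a, b, c, hab, hac, hbc, rfl⟩ := Finset.card_eq_three.mp h
    exact ⟨a, b, c, by simp [Set.subset_def], by simp, by simp, by simp⟩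

private lemma range_vec3 (p q r : ℝ × ℝ) : Set.range ![p, q, r] = ({p, q, r} : Set (ℝ × ℝ)) := by
  ext y
  constructor
  · rintro ⟨i, rfl⟩
    fin_cases i <;> simp
  · intro hy
    rcases hy with rfl | rfl | rfl
    exacts [⟨0, rfl⟩, ⟨1, rfl⟩, ⟨2, rfl⟩]

lemma isCompact_convexHull2 {s : Set (ℝ × ℝ)} (hs : IsCompact s) :
    IsCompact (convexHull ℝ s) := by
  rcases s.eq_empty_or_nonempty with rfl | hsne
  · simp
  set f : (ℝ × ℝ × ℝ) × ((ℝ × ℝ) × (ℝ × ℝ) × (ℝ × ℝ)) → ℝ × ℝ :=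
    fun z => z.1.1 • z.2.1 + z.1.2.1 • z.2.2.1 + z.1.2.2 • z.2.2.2 with hf
  set S1 : Set (ℝ × ℝ × ℝ) := {a | 0 ≤ a.1 ∧ 0 ≤ a.2.1 ∧ 0 ≤ a.2.2 ∧ a.1 + a.2.1 + a.2.2 = 1}
    with hS1
  have hS1c : IsCompact S1 := by
    have : S1 = (fun w : Fin 3 → ℝ => (w 0, w 1, w 2)) '' stdSimplex ℝ (Fin 3) := by
      ext ⟨a, b, c⟩
      constructor
      · rintro ⟨ha, hb, hc, habc⟩
        refine ⟨![a, b, c], ⟨fun i => by fin_cases i <;> simpa, ?_⟩, by simp⟩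
        simp [Fin.sum_univ_three, habc]
      · rintro ⟨w, ⟨hw0, hw1⟩, h⟩
        obtain ⟨rfl, rfl, rfl⟩ : w 0 = a ∧ w 1 = b ∧ w 2 = c := by
          simpa [Prod.ext_iff] using h
        exact ⟨hw0 0, hw0 1, hw0 2, by simpa [Fin.sum_univ_three] using hw1⟩
    rw [this]
    exact (isCompact_stdSimplex _ _).image (by fun_prop)
  have hK : IsCompact (S1 ×ˢ (s ×ˢ s ×ˢ s)) := hS1c.prod (hs.prod (hs.prod hs))
  have himg : convexHull ℝ s = f '' (S1 ×ˢ (s ×ˢ s ×ˢ s)) := by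
    apply Set.Subset.antisymm
    · intro x hx
      rw [convexHull_eq_union] at hx
      obtain ⟨t, ht⟩ := Set.mem_iUnion.mp hx
      obtain ⟨hts, ht2⟩ := Set.mem_iUnion.mp ht
      obtain ⟨hai, hxt⟩ := Set.mem_iUnion.mp ht2
      have hcard : t.card ≤ 3 := by
        have h1 := hai.card_le_finrank_succ
        have h2 : Module.finrank ℝ (vectorSpan ℝ (Set.range (Subtype.val : ↑t → ℝ × ℝ))) ≤
            Module.finrank ℝ (ℝ × ℝ) := Submodule.finrank_le _
        have h3 : Module.finrank ℝ (ℝ × ℝ) = 2 := by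
          simp [Module.finrank_prod]
        simpa [Fintype.card_coe, h3] using h1.trans (by omega)
      have hne : t.Nonempty := by
        rcases t.eq_empty_or_nonempty with rfl | h
        · simp at hxt
        · exact h
      obtain ⟨p, q, r, hsub, hp, hq, hr⟩ := exists_three t hcard hne
      have hx3 : x ∈ convexHull ℝ ({p, q, r} : Set (ℝ × ℝ)) :=
        convexHull_mono hsub hxt
      rw [← range_vec3, convexHull_range_eq_exists_affineCombination] at hx3
      obtain ⟨s', w, hw0, hw1, hwx⟩ := hx3
      rw [Finset.affineCombination_eq_linear_combination _ _ _ hw1] at hwx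
      set W : Fin 3 → ℝ := fun i => if i ∈ s' then w i else 0 with hW
      have hWsum : W 0 + W 1 + W 2 = 1 := by
        have : ∑ i : Fin 3, W i = ∑ i ∈ s', w i := by
          rw [Finset.sum_ite_mem]
          congr 1
          simp [Finset.univ_inter]
        rw [Fin.sum_univ_three] at this
        rw [this, hw1]
      have hWx : x = W 0 • p + W 1 • q + W 2 • r := by
        have h1 : ∑ i : Fin 3, W i • ![p, q, r] i = ∑ i ∈ s', w i • ![p, q, r] i := by
          have : ∀ i : Fin 3, W i • ![p, q, r] i
              = if i ∈ s' then w i • ![p, q, r] i else 0 := by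
            intro i
            by_cases h : i ∈ s' <;> simp [hW, h]
          rw [Finset.sum_congr rfl fun i _ => this i, Finset.sum_ite_mem,
            Finset.univ_inter]
        rw [hwx] at h1
        rw [← h1, Fin.sum_univ_three]
        simp
      refine ⟨((W 0, W 1, W 2), (p, q, r)),
        ⟨⟨?_, ?_, ?_, hWsum⟩, hts hp, hts hq, hts hr⟩, ?_⟩
      · by_cases h : (0 : Fin 3) ∈ s'
        · simpa [hW, h] using hw0 _ h
        · simp [hW, h]
      · by_cases h : (1 : Fin 3) ∈ s'
        · simpa [hW, h] using hw0 _ h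
        · simp [hW, h]
      · by_cases h : (2 : Fin 3) ∈ s'
        · simpa [hW, h] using hw0 _ h
        · simp [hW, h]
      · simp [hf, ← hWx]
    · rintro y ⟨⟨⟨a, b, c⟩, ⟨p, q, r⟩⟩, ⟨⟨ha, hb, hc, habc⟩, hp, hq, hr⟩, rfl⟩
      have := (convex_convexHull ℝ s).sum_mem (t := (Finset.univ : Finset (Fin 3)))
        (w := ![a, b, c]) (z := ![p, q, r])
        (fun i _ => by fin_cases i <;> simpa)
        (by simp [Fin.sum_univ_three]; exact habc)
        (fun i _ => by fin_cases i <;> exact subset_convexHull ℝ s ‹_›)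
      simpa [Fin.sum_univ_three, hf] using this
  rw [himg]
  exact hK.image (by fun_prop)



noncomputable def ctr (C : Set (ℝ × ℝ)) : ℝ × ℝ :=
  if h : IsCircle C then (h.choose, h.choose_spec.choose) else 0

noncomputable def rad (C : Set (ℝ × ℝ)) : ℝ :=
  if h : IsCircle C then h.choose_spec.choose_spec.choose else 0

lemma rad_nonneg {C : Set (ℝ × ℝ)} (h : IsCircle C) : 0 ≤ rad C := by
  rw [rad, dif_pos h]
  exact h.choose_spec.choose_spec.choose_spec.1

lemma circle_eq {C : Set (ℝ × ℝ)} (h : IsCircle C) :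
    C = {p : ℝ × ℝ | (p.1 - (ctr C).1) ^ 2 + (p.2 - (ctr C).2) ^ 2 = (rad C) ^ 2} := by
  rw [ctr, rad, dif_pos h, dif_pos h]
  exact h.choose_spec.choose_spec.choose_spec.2

/-- support value of a circle in direction w -/
noncomputable def sv (C : Set (ℝ × ℝ)) (w : ℝ × ℝ) : ℝ :=
  w.1 * (ctr C).1 + w.2 * (ctr C).2 + rad C

lemma sv_continuous (C : Set (ℝ × ℝ)) : Continuous fun w => sv C w := by
  unfold sv; fun_prop

/-- the farthest point of a circle in direction w -/
noncomputable def fp (C : Set (ℝ × ℝ)) (w : ℝ × ℝ) : ℝ × ℝ :=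
  ((ctr C).1 + rad C * w.1, (ctr C).2 + rad C * w.2)

lemma fp_mem {C : Set (ℝ × ℝ)} (h : IsCircle C) {w : ℝ × ℝ} (hw : w.1 ^ 2 + w.2 ^ 2 = 1) :
    fp C w ∈ C := by
  have : (fp C w).1 - (ctr C).1 = rad C * w.1 ∧ (fp C w).2 - (ctr C).2 = rad C * w.2 := by
    simp [fp]
  refine (Set.ext_iff.mp (circle_eq h) (fp C w)).mpr ?_
  simp only [Set.mem_setOf_eq, this.1, this.2]
  linear_combination (rad C) ^ 2 * hw

lemma dot_fp {C : Set (ℝ × ℝ)} (h : IsCircle C) {w : ℝ × ℝ} (hw : w.1 ^ 2 + w.2 ^ 2 = 1) :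
    w.1 * (fp C w).1 + w.2 * (fp C w).2 = sv C w := by
  simp only [fp, sv]
  linear_combination (rad C) * hw

lemma dot_le_sv {C : Set (ℝ × ℝ)} (h : IsCircle C) {w : ℝ × ℝ} (hw : w.1 ^ 2 + w.2 ^ 2 = 1)
    {p : ℝ × ℝ} (hp : p ∈ C) : w.1 * p.1 + w.2 * p.2 ≤ sv C w := by
  rw [circle_eq h] at hp
  simp only [Set.mem_setOf_eq] at hp
  have hr := rad_nonneg h
  set a := p.1 - (ctr C).1
  set b := p.2 - (ctr C).2
  have key : w.1 * a + w.2 * b ≤ rad C := by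
    nlinarith [sq_nonneg (w.1 * b - w.2 * a), sq_nonneg (w.1 * a + w.2 * b - rad C),
      sq_nonneg (w.1 * a + w.2 * b + rad C)]
  have : w.1 * p.1 + w.2 * p.2 = w.1 * a + w.2 * b + (w.1 * (ctr C).1 + w.2 * (ctr C).2) := by
    simp only [a, b]; ring
  rw [this, sv]
  linarith

lemma circle_compact {C : Set (ℝ × ℝ)} (h : IsCircle C) : IsCompact C := by
  have hcl : IsClosed C := by
    rw [circle_eq h]
    exact isClosed_eq (by fun_prop) continuous_const
  apply IsCompact.of_isClosed_subset (isCompact_closedBall (ctr C) (rad C)) hcl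
  intro p hp
  rw [circle_eq h] at hp
  simp only [Set.mem_setOf_eq] at hp
  have hr := rad_nonneg h
  rw [Metric.mem_closedBall]
  rw [Prod.dist_eq]
  simp only [Real.dist_eq]
  apply max_le <;> rw [abs_le] <;> constructor <;> nlinarith [hp]

lemma circle_nonempty {C : Set (ℝ × ℝ)} (h : IsCircle C) : C.Nonempty :=
  ⟨fp C (1, 0), fp_mem h (by norm_num)⟩

lemma hull_bound {Z : Finset (Set (ℝ × ℝ))} (hZ : ∀ E ∈ Z, IsCircle E) {w : ℝ × ℝ}
    (hw : w.1 ^ 2 + w.2 ^ 2 = 1) {M : ℝ} (hM : ∀ E ∈ Z, sv E w ≤ M) :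
    ∀ p ∈ convexHull ℝ (⋃₀ (↑Z : Set (Set (ℝ × ℝ)))), w.1 * p.1 + w.2 * p.2 ≤ M := by
  have hlin : IsLinearMap ℝ (fun p : ℝ × ℝ => w.1 * p.1 + w.2 * p.2) := by
    constructor
    · intro p q; simp; ring
    · intro c p; simp; ring
  have hsub : ⋃₀ (↑Z : Set (Set (ℝ × ℝ))) ⊆ {p : ℝ × ℝ | w.1 * p.1 + w.2 * p.2 ≤ M} := by
    rintro p ⟨E, hE, hp⟩
    exact (dot_le_sv (hZ E hE) hw hp).trans (hM E hE)
  exact fun p hp => convexHull_min hsub (convex_halfSpace_le hlin M) hp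

lemma sep {Z : Finset (Set (ℝ × ℝ))} (hZ : ∀ E ∈ Z, IsCircle E) {x : ℝ × ℝ}
    (hx : x ∉ convexHull ℝ (⋃₀ (↑Z : Set (Set (ℝ × ℝ))))) :
    ∃ w : ℝ × ℝ, w.1 ^ 2 + w.2 ^ 2 = 1 ∧ ∀ E ∈ Z, sv E w < w.1 * x.1 + w.2 * x.2 := by
  rcases Z.eq_empty_or_nonempty with rfl | ⟨E0, hE0⟩
  · exact ⟨(1, 0), by norm_num, by simp⟩
  have hcomp : IsCompact (⋃₀ (↑Z : Set (Set (ℝ × ℝ)))) :=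
    Set.Finite.isCompact_sUnion Z.finite_toSet (fun s hs => circle_compact (hZ s hs))
  have hhull := isCompact_convexHull2 hcomp
  obtain ⟨f, u, hfu, hux⟩ :=
    geometric_hahn_banach_closed_point (convex_convexHull ℝ _) hhull.isClosed hx
  set a := f (1, 0) with ha
  set b := f (0, 1) with hb
  have hfp : ∀ p : ℝ × ℝ, f p = a * p.1 + b * p.2 := by
    intro p
    have hp : f p = f (p.1 • ((1 : ℝ), (0 : ℝ)) + p.2 • ((0 : ℝ), (1 : ℝ))) := by
      congr 1
      simp [Prod.ext_iff]
    rw [hp, map_add, map_smul, map_smul, smul_eq_mul, smul_eq_mul]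
    ring
  obtain ⟨p0, hp0⟩ := circle_nonempty (hZ E0 hE0)
  have hp0' : p0 ∈ convexHull ℝ (⋃₀ (↑Z : Set (Set (ℝ × ℝ)))) :=
    subset_convexHull ℝ _ ⟨E0, hE0, hp0⟩
  have habpos : 0 < a ^ 2 + b ^ 2 := by
    by_contra h
    push_neg at h
    have ha0 : a = 0 := by nlinarith [sq_nonneg a, sq_nonneg b]
    have hb0 : b = 0 := by nlinarith [sq_nonneg a, sq_nonneg b]
    have h1 : f p0 < u := hfu _ hp0'
    have h2 : u < f x := hux
    rw [hfp] at h1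
    rw [hfp] at h2
    rw [ha0, hb0] at h1 h2
    simp at h1 h2
    linarith
  set n := Real.sqrt (a ^ 2 + b ^ 2) with hn
  have hnpos : 0 < n := Real.sqrt_pos.mpr habpos
  refine ⟨(a / n, b / n), ?_, ?_⟩
  · field_simp
    rw [hn, Real.sq_sqrt habpos.le]
  · intro E hE
    have hwu : ((a / n, b / n) : ℝ × ℝ).1 ^ 2 + ((a / n, b / n) : ℝ × ℝ).2 ^ 2 = 1 := by
      field_simp
      rw [hn, Real.sq_sqrt habpos.le]
    have hmem : fp E (a / n, b / n) ∈ convexHull ℝ (⋃₀ (↑Z : Set (Set (ℝ × ℝ)))) :=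
      subset_convexHull ℝ _ ⟨E, hE, fp_mem (hZ E hE) hwu⟩
    have h1 : f (fp E (a / n, b / n)) < f x := (hfu _ hmem).trans hux
    rw [hfp, hfp] at h1
    have h2 : a * (fp E (a / n, b / n)).1 + b * (fp E (a / n, b / n)).2
        = n * ((a / n) * (fp E (a / n, b / n)).1 + (b / n) * (fp E (a / n, b / n)).2) := by
      field_simp
    have h3 : a * x.1 + b * x.2 = n * ((a / n) * x.1 + (b / n) * x.2) := by
      field_simp
    rw [h2, h3] at h1
    have h4 := (mul_lt_mul_iff_right₀ hnpos).mp h1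
    rw [dot_fp (hZ E hE) hwu] at h4
    exact h4

lemma sv_le_of_hull {Y : Finset (Set (ℝ × ℝ))} (hY : ∀ E ∈ Y, IsCircle E)
    {A B : Set (ℝ × ℝ)} (hA : IsCircle A) (hB : IsCircle B)
    (hAin : A ⊆ convexHull ℝ (⋃₀ ((↑Y : Set (Set (ℝ × ℝ))) ∪ {B})))
    {w : ℝ × ℝ} (hw : w.1 ^ 2 + w.2 ^ 2 = 1)
    (hgt : ∀ E ∈ Y, sv E w < sv A w) : sv A w ≤ sv B w := by
  by_contra h
  push_neg at h
  set Z : Finset (Set (ℝ × ℝ)) := insert B Y with hZdef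
  have hZ : ∀ E ∈ Z, IsCircle E := by
    intro E hE
    rcases Finset.mem_insert.mp hE with rfl | hE
    · exact hB
    · exact hY E hE
  have hcoe : (↑Z : Set (Set (ℝ × ℝ))) = ↑Y ∪ {B} := by
    rw [hZdef, Finset.coe_insert, Set.insert_eq, Set.union_comm]
  have hne' : Z.Nonempty := ⟨B, Finset.mem_insert_self _ _⟩
  set M := Z.sup' hne' (fun E => sv E w) with hM
  have hMle : ∀ E ∈ Z, sv E w ≤ M := fun E hE => Finset.le_sup' (fun E => sv E w) hE
  have hMlt : M < sv A w := by
    rw [hM, Finset.sup'_lt_iff]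
    intro E hE
    rcases Finset.mem_insert.mp hE with rfl | hE
    · exact h
    · exact hgt E hE
  have hfpmem : fp A w ∈ convexHull ℝ (⋃₀ (↑Z : Set (Set (ℝ × ℝ)))) := by
    rw [hcoe]
    exact hAin (fp_mem hA hw)
  have := hull_bound hZ hw hMle (fp A w) hfpmem
  rw [dot_fp hA hw] at this
  linarith

lemma antiExchange {Y : Finset (Set (ℝ × ℝ))} (hY : ∀ E ∈ Y, IsCircle E)
    {C D : Set (ℝ × ℝ)} (hC : IsCircle C) (hD : IsCircle D) (hne : C ≠ D)
    (hCnot : ¬ C ⊆ convexHull ℝ (⋃₀ (↑Y : Set (Set (ℝ × ℝ)))))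
    (hCin : C ⊆ convexHull ℝ (⋃₀ ((↑Y : Set (Set (ℝ × ℝ))) ∪ {D})))
    (hDin : D ⊆ convexHull ℝ (⋃₀ ((↑Y : Set (Set (ℝ × ℝ))) ∪ {C}))) : False := by
  obtain ⟨x, hxC, hxnot⟩ := Set.not_subset.mp hCnot
  obtain ⟨w, hw, hgt⟩ := sep hY hxnot
  have hgtC : ∀ E ∈ Y, sv E w < sv C w :=
    fun E hE => (hgt E hE).trans_le (dot_le_sv hC hw hxC)
  set O : Set (ℝ × ℝ) := {v | ∀ E ∈ Y, sv E v < sv C v} with hO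
  have hOopen : IsOpen O := by
    have : O = ⋂ E ∈ Y, {v | sv E v < sv C v} := by
      ext v; simp [hO]
    rw [this]
    exact isOpen_biInter_finset fun E _ => isOpen_lt (sv_continuous E) (sv_continuous C)
  -- the key equation on O
  set α := (ctr C).1 - (ctr D).1 with hα
  set β := (ctr C).2 - (ctr D).2 with hβ
  set γ := rad C - rad D with hγ
  have heq : ∀ v : ℝ × ℝ, v.1 ^ 2 + v.2 ^ 2 = 1 → v ∈ O → α * v.1 + β * v.2 + γ = 0 := by
    intro v hv hvO
    have hgtv : ∀ E ∈ Y, sv E v < sv C v := hvO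
    have hCD : sv C v ≤ sv D v := sv_le_of_hull hY hC hD hCin hv hgtv
    have hgtD : ∀ E ∈ Y, sv E v < sv D v := fun E hE => (hgtv E hE).trans_le hCD
    have hDC : sv D v ≤ sv C v := sv_le_of_hull hY hD hC hDin hv hgtD
    have : sv C v = sv D v := le_antisymm hCD hDC
    simp only [sv] at this
    simp only [hα, hβ, hγ]
    linarith [this]
  -- rotations
  set rot : ℝ → ℝ × ℝ := fun t =>
    ((1 - t ^ 2) / (1 + t ^ 2) * w.1 - 2 * t / (1 + t ^ 2) * w.2,
     2 * t / (1 + t ^ 2) * w.1 + (1 - t ^ 2) / (1 + t ^ 2) * w.2) with hrot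
  have hrotu : ∀ t, (rot t).1 ^ 2 + (rot t).2 ^ 2 = 1 := by
    intro t
    have ht : (1 : ℝ) + t ^ 2 ≠ 0 := by positivity
    simp only [hrot]
    field_simp
    linear_combination (1 + t ^ 2) ^ 2 * hw
  have hrot0 : rot 0 = w := by simp [hrot]
  have hcont : Continuous rot := by
    have h1 : Continuous fun t : ℝ => (1 - t ^ 2) / (1 + t ^ 2) :=
      Continuous.div (by fun_prop) (by fun_prop) (fun t => by positivity)
    have h2 : Continuous fun t : ℝ => 2 * t / (1 + t ^ 2) :=
      Continuous.div (by fun_prop) (by fun_prop) (fun t => by positivity)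
    exact ((h1.mul continuous_const).sub (h2.mul continuous_const)).prodMk
      ((h2.mul continuous_const).add (h1.mul continuous_const))
  have hwO : w ∈ O := hgtC
  have hpre : rot ⁻¹' O ∈ nhds (0 : ℝ) := by
    have := hcont.continuousAt (x := (0 : ℝ))
    exact this.preimage_mem_nhds (by rw [hrot0]; exact hOopen.mem_nhds hwO)
  obtain ⟨ε, hεpos, hεsub⟩ := Metric.mem_nhds_iff.mp hpre
  set t := ε / 2 with htdef
  have htpos : 0 < t := by positivity
  have htmem : rot t ∈ O := hεsub (by simp [Real.dist_eq, htdef]; rw [abs_of_pos hεpos]; linarith)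
  have htmem' : rot (-t) ∈ O := hεsub (by simp [Real.dist_eq, htdef]; rw [abs_of_pos hεpos]; linarith)
  have h0 := heq w hw hwO
  have h1 := heq (rot t) (hrotu t) htmem
  have hneg : rot (-t) = ((1 - t ^ 2) / (1 + t ^ 2) * w.1 + 2 * t / (1 + t ^ 2) * w.2,
      -(2 * t / (1 + t ^ 2)) * w.1 + (1 - t ^ 2) / (1 + t ^ 2) * w.2) := by
    simp only [hrot]
    apply Prod.ext <;> simp <;> ring
  have h2 := heq (rot (-t)) (hrotu (-t)) htmem'
  rw [hneg] at h2
  simp only [] at h2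
  have ht0 : (1 : ℝ) + t ^ 2 ≠ 0 := by positivity
  simp only [hrot] at h1
  have h1' : α * ((1 - t ^ 2) * w.1 - 2 * t * w.2) + β * (2 * t * w.1 + (1 - t ^ 2) * w.2)
      + γ * (1 + t ^ 2) = 0 := by
    field_simp at h1
    linarith [h1]
  have h2' : α * ((1 - t ^ 2) * w.1 + 2 * t * w.2) + β * (-(2 * t) * w.1 + (1 - t ^ 2) * w.2)
      + γ * (1 + t ^ 2) = 0 := by
    field_simp at h2
    have hfac : (α * ((1 - t ^ 2) * w.1 + 2 * t * w.2) + β * (-(2 * t) * w.1 + (1 - t ^ 2) * w.2)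
        + γ * (1 + t ^ 2)) * ((1 + t ^ 2) * (1 + t ^ 2)) = 0 := by linear_combination (1 + t ^ 2) * (1 + t ^ 2) * h2
    rcases mul_eq_zero.mp hfac with h | h
    · exact h
    · exact absurd h (by positivity)
  have hγ0 : γ = 0 := by
    have h4 : 4 * t ^ 2 * γ = 0 := by linear_combination h1' + h2' - 2 * (1 - t ^ 2) * h0
    have h5 : (4 : ℝ) * t ^ 2 ≠ 0 := by positivity
    exact (mul_eq_zero.mp h4).resolve_left h5
  have hlin1 : α * w.1 + β * w.2 = 0 := by linarith [h0, hγ0]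
  have hlin2 : β * w.1 - α * w.2 = 0 := by
    have h4 : 4 * t * (β * w.1 - α * w.2) = 0 := by linear_combination h1' - h2'
    have h5 : (4 : ℝ) * t ≠ 0 := by positivity
    exact (mul_eq_zero.mp h4).resolve_left h5
  have hα0 : α = 0 := by
    have : α = w.1 * (α * w.1 + β * w.2) - w.2 * (β * w.1 - α * w.2) := by
      linear_combination (-α) * hw
    rw [hlin1, hlin2] at this
    simpa using this
  have hβ0 : β = 0 := by
    have : β = w.2 * (α * w.1 + β * w.2) + w.1 * (β * w.1 - α * w.2) := by
      linear_combination (-β) * hw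
    rw [hlin1, hlin2] at this
    simpa using this
  apply hne
  have hc1 : (ctr C).1 = (ctr D).1 := by rw [hα] at hα0; linarith
  have hc2 : (ctr C).2 = (ctr D).2 := by rw [hβ] at hβ0; linarith
  have hr : rad C = rad D := by rw [hγ] at hγ0; linarith
  refine (circle_eq hC).trans (Eq.trans ?_ (circle_eq hD).symm)
  rw [hc1, hc2, hr]


def clF (F : Finset (Set (ℝ × ℝ))) (Y : Set (Set (ℝ × ℝ))) : Set (Set (ℝ × ℝ)) :=
  {C | C ∈ F ∧ C ⊆ convexHull ℝ (⋃₀ Y)}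

lemma clF_closedIn (F : Finset (Set (ℝ × ℝ))) (Y : Set (Set (ℝ × ℝ))) :
    ClosedIn F (clF F Y) := by
  refine ⟨fun C hC => hC.1, fun C hCF hsub => ⟨hCF, hsub.trans ?_⟩⟩
  refine convexHull_min ?_ (convex_convexHull ℝ _)
  rintro p ⟨E, hE, hp⟩
  exact hE.2 hp

lemma subset_clF {F : Finset (Set (ℝ × ℝ))} {Y : Set (Set (ℝ × ℝ))} (hY : Y ⊆ ↑F) :
    Y ⊆ clF F Y :=
  fun C hC => ⟨hY hC, (Set.subset_sUnion_of_mem hC).trans (subset_convexHull ℝ _)⟩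

lemma clF_le {F : Finset (Set (ℝ × ℝ))} {Y W : Set (Set (ℝ × ℝ))} (hW : ClosedIn F W)
    (hYW : Y ⊆ W) : clF F Y ⊆ W := by
  rintro C ⟨hCF, hsub⟩
  exact hW.2 C hCF (hsub.trans (convexHull_mono (Set.sUnion_mono hYW)))

lemma inter_closedIn {F : Finset (Set (ℝ × ℝ))} {X Y : Set (Set (ℝ × ℝ))}
    (hX : ClosedIn F X) (hY : ClosedIn F Y) : ClosedIn F (X ∩ Y) := by
  refine ⟨Set.inter_subset_left.trans hX.1, fun C hCF hsub => ?_⟩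
  exact ⟨hX.2 C hCF (hsub.trans (convexHull_mono (Set.sUnion_mono Set.inter_subset_left))),
    hY.2 C hCF (hsub.trans (convexHull_mono (Set.sUnion_mono Set.inter_subset_right)))⟩

instance latClosed (F : Finset (Set (ℝ × ℝ))) : Lattice {Y : Set (Set (ℝ × ℝ)) // ClosedIn F Y} :=
  { (inferInstance : PartialOrder {Y : Set (Set (ℝ × ℝ)) // ClosedIn F Y}) with
    sup := fun X Y => ⟨clF F (X.val ∪ Y.val), clF_closedIn F _⟩
    inf := fun X Y => ⟨X.val ∩ Y.val, inter_closedIn X.2 Y.2⟩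
    le_sup_left := fun X Y =>
      show X.val ⊆ clF F (X.val ∪ Y.val) from
        Set.subset_union_left.trans (subset_clF (Set.union_subset X.2.1 Y.2.1))
    le_sup_right := fun X Y =>
      show Y.val ⊆ clF F (X.val ∪ Y.val) from
        Set.subset_union_right.trans (subset_clF (Set.union_subset X.2.1 Y.2.1))
    sup_le := fun X Y Z hXZ hYZ =>
      show clF F (X.val ∪ Y.val) ⊆ Z.val from clF_le Z.2 (Set.union_subset hXZ hYZ)
    inf_le_left := fun X Y => show X.val ∩ Y.val ⊆ X.val from Set.inter_subset_left
    inf_le_right := fun X Y => show X.val ∩ Y.val ⊆ Y.val from Set.inter_subset_right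
    le_inf := fun X Y Z hXY hXZ =>
      show X.val ⊆ Y.val ∩ Z.val from Set.subset_inter hXY hXZ }

instance bddClosed (F : Finset (Set (ℝ × ℝ))) :
    BoundedOrder {Y : Set (Set (ℝ × ℝ)) // ClosedIn F Y} where
  top := ⟨↑F, ⟨subset_refl _, fun C hC _ => hC⟩⟩
  le_top := fun X => X.2.1
  bot := ⟨clF F ∅, clF_closedIn F ∅⟩
  bot_le := fun X => show clF F ∅ ⊆ X.val from clF_le X.2 (Set.empty_subset _)

noncomputable instance finClosed (F : Finset (Set (ℝ × ℝ))) :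
    Fintype {Y : Set (Set (ℝ × ℝ)) // ClosedIn F Y} := by
  apply Fintype.ofInjective
    (fun X : {Y : Set (Set (ℝ × ℝ)) // ClosedIn F Y} =>
      (fun C : {x // x ∈ F} => (↑C ∈ X.val : Prop)))
  intro X Y h
  apply Subtype.ext
  ext C
  constructor
  · intro hC
    have := congr_fun h ⟨C, X.2.1 hC⟩
    simpa using this.mp hC
  · intro hC
    have := congr_fun h ⟨C, Y.2.1 hC⟩
    simpa using this.mpr hC

def ExtS (u : Set (Set (ℝ × ℝ))) : Set (Set (ℝ × ℝ)) :=
  {C | C ∈ u ∧ ¬ C ⊆ convexHull ℝ (⋃₀ (u \ {C}))}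

lemma middle_closed {F : Finset (Set (ℝ × ℝ))} {u W : Set (Set (ℝ × ℝ))}
    (hu : ClosedIn F u) (h1 : u \ ExtS u ⊆ W) (h2 : W ⊆ u) : ClosedIn F W := by
  refine ⟨h2.trans hu.1, ?_⟩
  intro C hCF hsub
  have hCu : C ∈ u := hu.2 C hCF (hsub.trans (convexHull_mono (Set.sUnion_mono h2)))
  by_contra hCW
  have hCext : C ∈ ExtS u := by
    by_contra h
    exact hCW (h1 ⟨hCu, h⟩)
  refine hCext.2 (hsub.trans (convexHull_mono (Set.sUnion_mono ?_)))
  intro D hD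
  exact ⟨h2 hD, fun hDC => hCW ((Set.mem_singleton_iff.mp hDC) ▸ hD)⟩

lemma cover_subset {F : Finset (Set (ℝ × ℝ))} (hF : ∀ C ∈ F, IsCircle C)
    {v u : {Y : Set (Set (ℝ × ℝ)) // ClosedIn F Y}} (hcov : v ⋖ u) :
    u.val \ ExtS u.val ⊆ v.val := by
  intro D0 hD0
  by_contra hD0v
  have hvu : v.val ⊆ u.val := hcov.le
  set A := u.val \ v.val with hA
  have hAF : A ⊆ ↑F := fun C hC => u.2.1 hC.1
  have hAfin : A.Finite := F.finite_toSet.subset hAF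
  have hD0A : D0 ∈ A := ⟨hD0.1, hD0v⟩
  obtain ⟨D, hDA, hmin⟩ := Finset.exists_min_image hAfin.toFinset
    (fun D => (clF F (v.val ∪ {D}) ∩ A).ncard) ⟨D0, hAfin.mem_toFinset.mpr hD0A⟩
  rw [hAfin.mem_toFinset] at hDA
  have hDu : D ∈ u.val := hDA.1
  have hDF : D ∈ F := u.2.1 hDu
  have hvF : v.val ⊆ ↑F := v.2.1
  have hDnv : D ∉ v.val := hDA.2
  have step1 : clF F (v.val ∪ {D}) ⊆ u.val :=
    clF_le u.2 (Set.union_subset hvu (Set.singleton_subset_iff.mpr hDu))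
  have step2 : D ∈ clF F (v.val ∪ {D}) :=
    subset_clF (Set.union_subset hvF (Set.singleton_subset_iff.mpr hDF))
      (Set.mem_union_right _ rfl)
  have hv_in : v.val ⊆ clF F (v.val ∪ {D}) :=
    Set.subset_union_left.trans
      (subset_clF (Set.union_subset hvF (Set.singleton_subset_iff.mpr hDF)))
  have hvfin : v.val.Finite := F.finite_toSet.subset hvF
  have hnotin_v : ∀ E ∈ A, ¬ E ⊆ convexHull ℝ (⋃₀ v.val) := by
    intro E hEA hsub
    exact hEA.2 (v.2.2 E (u.2.1 hEA.1) hsub)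
  have claim : clF F (v.val ∪ {D}) ∩ A = {D} := by
    apply Set.Subset.antisymm
    · rintro E ⟨hEcl, hEA⟩
      by_contra hED
      rw [Set.mem_singleton_iff] at hED
      have hsub2 : clF F (v.val ∪ {E}) ⊆ clF F (v.val ∪ {D}) :=
        clF_le (clF_closedIn F _)
          (Set.union_subset hv_in (Set.singleton_subset_iff.mpr hEcl))
      have hkey : clF F (v.val ∪ {E}) ∩ A = clF F (v.val ∪ {D}) ∩ A := by
        apply Set.eq_of_subset_of_ncard_le
        · exact Set.inter_subset_inter_left A hsub2
        · exact hmin E (hAfin.mem_toFinset.mpr hEA)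
        · exact hAfin.inter_of_right _
      have hDmem : D ∈ clF F (v.val ∪ {E}) := by
        have hD' : D ∈ clF F (v.val ∪ {D}) ∩ A := ⟨step2, hDA⟩
        rw [← hkey] at hD'
        exact hD'.1
      set Vt := hvfin.toFinset with hVt
      have hVtc : (↑Vt : Set (Set (ℝ × ℝ))) = v.val := hvfin.coe_toFinset
      refine antiExchange (Y := Vt) ?_ (hF E (hAF hEA)) (hF D hDF) hED ?_ ?_ ?_
      · intro E' hE'
        exact hF E' (hvF (hvfin.mem_toFinset.mp hE'))
      · rw [hVtc]
        exact hnotin_v E hEA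
      · rw [hVtc]
        exact hEcl.2
      · rw [hVtc]
        exact hDmem.2
    · intro E hE
      rw [Set.mem_singleton_iff] at hE
      subst hE
      exact ⟨step2, hDA⟩
  have hw : clF F (v.val ∪ {D}) = v.val ∪ {D} := by
    apply Set.Subset.antisymm
    · intro E hE
      by_cases hEv : E ∈ v.val
      · exact Or.inl hEv
      · have hEm : E ∈ clF F (v.val ∪ {D}) ∩ A := ⟨hE, ⟨step1 hE, hEv⟩⟩
        rw [claim] at hEm
        exact Or.inr hEm
    · exact subset_clF (Set.union_subset hvF (Set.singleton_subset_iff.mpr hDF))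
  set w' : {Y : Set (Set (ℝ × ℝ)) // ClosedIn F Y} := ⟨clF F (v.val ∪ {D}), clF_closedIn F _⟩
    with hw'
  have hvltw : v < w' := by
    apply lt_of_le_of_ne
    · exact (show v.val ⊆ clF F (v.val ∪ {D}) from hv_in)
    · intro he
      exact hDnv (by rw [he]; exact step2)
  have hwu : w' ≤ u := step1
  have hw'u : w' = u := by
    rcases hcov.eq_or_eq hvltw.le hwu with h | h
    · exact absurd h.symm hvltw.ne
    · exact h
  have huval : u.val = v.val ∪ {D} := by
    rw [← hw'u]
    exact hw
  have hD0D : D0 = D := by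
    have hm : D0 ∈ v.val ∪ {D} := huval ▸ hD0.1
    rcases hm with h | h
    · exact absurd h hD0v
    · exact h
  apply hD0.2
  refine ⟨hD0.1, ?_⟩
  have hdiff : u.val \ {D0} = v.val := by
    rw [huval, hD0D]
    ext E
    simp only [Set.mem_diff, Set.mem_union, Set.mem_singleton_iff]
    constructor
    · rintro ⟨h1 | h1, h2⟩
      · exact h1
      · exact absurd h1 h2
    · intro h
      exact ⟨Or.inl h, fun he => hDnv (he ▸ h)⟩
  rw [hdiff]
  intro hsub
  exact hDnv (hD0D ▸ v.2.2 D0 (hD0D ▸ hDF) hsub)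





theorem latF_is_meetDistributive_lattice (F : Finset (Set (ℝ × ℝ)))
    (hF : ∀ C ∈ F, IsCircle C) :
    ∃ (K : FinBddLattice) (_ : K.carrier ≃o {Y : Set (Set (ℝ × ℝ)) // ClosedIn F Y}),
      MeetDistrib K.carrier := by
  refine ⟨⟨{Y : Set (Set (ℝ × ℝ)) // ClosedIn F Y}⟩, OrderIso.refl _, ?_⟩
  intro u _ x hx y hy z hz
  have hmcl : ClosedIn F (u.val \ ExtS u.val) :=
    middle_closed u.2 (subset_refl _) Set.diff_subset
  set m : {Y : Set (Set (ℝ × ℝ)) // ClosedIn F Y} := ⟨u.val \ ExtS u.val, hmcl⟩ with hm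
  have hmlow : m ≤ lowstar u :=
    Finset.le_inf fun v hv => cover_subset hF (Finset.mem_filter.mp hv).2
  have hbound : ∀ a : {Y : Set (Set (ℝ × ℝ)) // ClosedIn F Y},
      a ∈ Set.Icc (lowstar u) u → u.val \ ExtS u.val ⊆ a.val ∧ a.val ⊆ u.val :=
    fun a ha => ⟨hmlow.trans ha.1, ha.2⟩
  have hjoin : ∀ a b : {Y : Set (Set (ℝ × ℝ)) // ClosedIn F Y},
      a ∈ Set.Icc (lowstar u) u → b ∈ Set.Icc (lowstar u) u →
      (a ⊔ b).val = a.val ∪ b.val := by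
    intro a b ha hb
    have hcl : ClosedIn F (a.val ∪ b.val) :=
      middle_closed u.2 ((hbound a ha).1.trans Set.subset_union_left)
        (Set.union_subset (hbound a ha).2 (hbound b hb).2)
    show clF F (a.val ∪ b.val) = a.val ∪ b.val
    exact Set.Subset.antisymm (clF_le hcl (subset_refl _)) (subset_clF hcl.1)
  have hxy : x ⊓ y ∈ Set.Icc (lowstar u) u :=
    ⟨le_inf hx.1 hy.1, inf_le_left.trans hx.2⟩
  have hxz : x ⊓ z ∈ Set.Icc (lowstar u) u :=
    ⟨le_inf hx.1 hz.1, inf_le_left.trans hx.2⟩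
  apply Subtype.ext
  have h1 : (y ⊔ z).val = y.val ∪ z.val := hjoin y z hy hz
  have h2 : ((x ⊓ y) ⊔ (x ⊓ z)).val = (x.val ∩ y.val) ∪ (x.val ∩ z.val) :=
    hjoin (x ⊓ y) (x ⊓ z) hxy hxz
  show (x ⊓ (y ⊔ z)).val = ((x ⊓ y) ⊔ (x ⊓ z)).val
  have h3 : (x ⊓ (y ⊔ z)).val = x.val ∩ (y ⊔ z).val := rfl
  rw [h3, h1, h2]
  exact Set.inter_union_distrib_left x.val y.val z.val

end CzedliAux
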